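/- In the semiprimitive case with γ, p, and (p^j+1)/N all odd, the Gaussian periods of order N over F_q satisfy η_{N/2}^{(N,q)} = √q − (√q+1)/N and η_i^{(N,q)} = −(√q+1)/N for all i ≠ N/2. -/

import Mathlib

open scoped Classical

/-- The canonical additive character of a finite field `F` of characteristic `p`. -/
noncomputable def canChar (p : ℕ) (F : Type*) [Field F] [Fintype F] [Algebra (ZMod p) F]
    (x : F) : ℂ :=
  Complex.exp (2 * Real.pi * Complex.I * ((Algebra.trace (ZMod p) F x).val : ℂ) / p)

/-- Gaussian period `η_i^{(N,q)}` of order `N` w.r.t. primitive element `α`. -/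
noncomputable def gaussPeriod (p : ℕ) (F : Type*) [Field F] [Fintype F]
    [Algebra (ZMod p) F] (α : F) (N i : ℕ) : ℂ :=
  ∑ x : F, if ∃ k : ℕ, x = α ^ i * (α ^ N) ^ k then canChar p F x else 0

section CanCharAux

open Finset

set_option linter.unusedSectionVars false

variable (p : ℕ) [Fact p.Prime] (F : Type*) [Field F] [Fintype F] [Algebra (ZMod p) F]

lemma canChar_eq (x : F) :
    canChar p F x
      = Complex.exp (2 * Real.pi * Complex.I / p) ^ (Algebra.trace (ZMod p) F x).val := by
  rw [canChar, ← Complex.exp_nat_mul]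
  ring_nf

lemma exp_pow_p : Complex.exp (2 * Real.pi * Complex.I / p) ^ p = 1 := by
  have hp0 : (p : ℂ) ≠ 0 := Nat.cast_ne_zero.2 (Fact.out : p.Prime).pos.ne'
  have h : (p : ℂ) * (2 * Real.pi * Complex.I / p) = 2 * Real.pi * Complex.I := by
    field_simp
  rw [← Complex.exp_nat_mul, h, Complex.exp_two_pi_mul_I]

lemma canChar_of_trace_eq_zero {x : F} (h : Algebra.trace (ZMod p) F x = 0) :
    canChar p F x = 1 := by
  rw [canChar_eq, h, ZMod.val_zero, pow_zero]

lemma canChar_zero : canChar p F 0 = 1 :=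
  canChar_of_trace_eq_zero p F (map_zero _)

lemma canChar_add (x y : F) : canChar p F (x + y) = canChar p F x * canChar p F y := by
  rw [canChar_eq, canChar_eq, canChar_eq, ← pow_add, map_add]
  set a := Algebra.trace (ZMod p) F x
  set b := Algebra.trace (ZMod p) F y
  rw [ZMod.val_add]
  conv_rhs => rw [← Nat.mod_add_div (a.val + b.val) p]
  rw [pow_add, pow_mul, exp_pow_p, one_pow, mul_one]

lemma canChar_ne_one {x : F} (h : Algebra.trace (ZMod p) F x ≠ 0) :
    canChar p F x ≠ 1 := by
  haveI : NeZero p := ⟨(Fact.out : p.Prime).pos.ne'⟩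
  rw [canChar]
  intro hc
  rw [Complex.exp_eq_one_iff] at hc
  obtain ⟨n, hn⟩ := hc
  have hp0 : (p : ℂ) ≠ 0 := Nat.cast_ne_zero.2 (Fact.out : p.Prime).pos.ne'
  have h2 : (2 * Real.pi * Complex.I : ℂ) ≠ 0 := by
    simp [Real.pi_ne_zero, Complex.I_ne_zero, Complex.ofReal_ne_zero]
  set v := (Algebra.trace (ZMod p) F x).val with hv
  have key : ((v : ℂ) / p) * (2 * Real.pi * Complex.I)
      = (n : ℂ) * (2 * Real.pi * Complex.I) := by
    rw [← hn]; ring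
  have hvn : (v : ℂ) / p = (n : ℂ) := mul_right_cancel₀ h2 key
  have hvnp : (v : ℂ) = (n : ℂ) * p := by
    field_simp at hvn; linear_combination hvn
  have hint : (v : ℤ) = n * p := by exact_mod_cast hvnp
  have hdvd : p ∣ v := by
    have : (p : ℤ) ∣ (v : ℤ) := ⟨n, by linarith⟩
    exact_mod_cast this
  have hlt : v < p := ZMod.val_lt _
  have : v = 0 := Nat.eq_zero_of_dvd_of_lt hdvd hlt
  exact h (by rwa [← ZMod.val_eq_zero])

lemma trace_pow_pow (x : F) (s : ℕ) :
    Algebra.trace (ZMod p) F (x ^ p ^ s) = Algebra.trace (ZMod p) F x := by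
  haveI : CharP F p := charP_of_injective_algebraMap (algebraMap (ZMod p) F).injective p
  haveI : ExpChar F p := ExpChar.prime Fact.out
  induction s with
  | zero => simp
  | succ n ih =>
      have hx : x ^ p ^ (n + 1) = (x ^ p ^ n) ^ p := by rw [← pow_mul, pow_succ]
      rw [hx]
      let e : F ≃ₐ[ZMod p] F := AlgEquiv.ofRingEquiv (f := frobeniusEquiv F p)
        (fun c => by rw [frobeniusEquiv_apply, frobenius_def, ← map_pow, ZMod.pow_card])
      have h2 := Algebra.trace_eq_of_algEquiv e (x ^ p ^ n)
      rw [show e (x ^ p ^ n) = (x ^ p ^ n) ^ p from rfl] at h2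
      rw [h2, ih]

lemma exists_trace_ne_zero : ∃ x : F, Algebra.trace (ZMod p) F x ≠ 0 := by
  haveI : CharP F p := charP_of_injective_algebraMap (algebraMap (ZMod p) F).injective p
  have h : ringChar F = p := ringChar.eq F p
  subst h
  obtain ⟨b, hb⟩ := FiniteField.trace_to_zmod_nondegenerate F (one_ne_zero (α := F))
  exact ⟨1 * b, hb⟩

lemma sum_canChar : ∑ x : F, canChar p F x = 0 := by
  obtain ⟨x0, hx0⟩ := exists_trace_ne_zero p F
  have hne := canChar_ne_one p F hx0
  have key : ∑ x : F, canChar p F x = canChar p F x0 * ∑ x : F, canChar p F x := by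
    rw [Finset.mul_sum]
    have h1 : ∑ x : F, canChar p F (x0 + x) = ∑ x : F, canChar p F x :=
      Fintype.sum_equiv (Equiv.addLeft x0) _ _ (fun x => rfl)
    rw [← h1]
    exact Finset.sum_congr rfl (fun x _ => canChar_add p F x0 x)
  have h0 : (canChar p F x0 - 1) * ∑ x : F, canChar p F x = 0 := by
    rw [sub_mul, one_mul, ← key, sub_self]
  rcases mul_eq_zero.1 h0 with h | h
  · exact absurd (by linear_combination h) hne
  · exact h

lemma sum_canChar_mul {c : F} (hc : c ≠ 0) : ∑ x : F, canChar p F (c * x) = 0 := by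
  rw [← sum_canChar p F]
  exact Fintype.sum_equiv (Equiv.mulLeft₀ c hc) _ _ (fun x => rfl)

end CanCharAux

section Key

open Finset

lemma key_period (p s N M : ℕ) [Fact p.Prime] (F : Type*) [Field F] [Fintype F]
    [Algebra (ZMod p) F]
    (hps : Odd p) (hcard : Fintype.card F = p ^ s * p ^ s)
    (hNM : N * M = p ^ s + 1) (hModd : Odd M) (hN2 : 2 ≤ N)
    (α : F) (hα : ∀ x : F, x ≠ 0 → ∃ k : ℕ, x = α ^ k) (i : ℕ) (hi : i < N) :
    gaussPeriod p F α N i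
      = (if i = N / 2 then ((p ^ s : ℕ) : ℂ) else 0) - (M : ℂ) := by
  haveI : CharP F p := charP_of_injective_algebraMap (algebraMap (ZMod p) F).injective p
  set r := p ^ s with hr
  -- basic numerics
  have hrodd : Odd r := hps.pow
  obtain ⟨ρ, hρ⟩ := hrodd
  have hr2 : 2 ≤ r := by
    have h2 : 2 ≤ Fintype.card F := Fintype.one_lt_card
    rw [hcard] at h2
    by_contra h
    interval_cases r <;> omega
  have hr3 : 3 ≤ r := by omega
  have hM0 : 0 < M := by
    rcases Nat.eq_zero_or_pos M with h | h
    · rw [h, mul_zero] at hNM; omega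
    · exact h
  obtain ⟨m, hm⟩ := hModd
  have hN0 : 0 < N := by omega
  have hNeven : 2 ∣ N := by
    have h2 : 2 ∣ N * M := by rw [hNM]; omega
    rcases (Nat.Prime.dvd_mul Nat.prime_two).1 h2 with h | h
    · exact h
    · omega
  set n := N / 2 with hn
  have hN2n : N = 2 * n := by omega
  have hnN : n < N := by omega
  set t0 := N * m + n with ht0
  have h2t0 : 2 * t0 = r + 1 := by
    have e1 : 2 * t0 = N * (2 * m + 1) := by rw [ht0, hN2n]; ring
    rw [e1, ← hm, hNM]
  have ht0pos : 0 < t0 := by omega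
  have ht0lt : t0 < r + 1 := by omega
  have hQcard : Fintype.card F - 1 = (r - 1) * (r + 1) := by
    have e1 : (r - 1) * (r + 1) = 4 * (ρ * ρ) + 4 * ρ := by
      have : r - 1 = 2 * ρ := by omega
      rw [this, hρ]; ring
    have e2 : r * r = 4 * (ρ * ρ) + 4 * ρ + 1 := by rw [hρ]; ring
    rw [hcard]; omega
  have hQpos : 0 < (r - 1) * (r + 1) := Nat.mul_pos (by omega) (by omega)
  -- α is a primitive root
  have hcard3 : 3 ≤ Fintype.card F := by
    rw [hcard]
    calc 3 ≤ r := hr3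
    _ ≤ r * r := Nat.le_mul_of_pos_left r (by omega)
  have hα0 : α ≠ 0 := by
    intro h0
    have hne : (Finset.univ \ ({0, 1} : Finset F)).Nonempty := by
      apply Finset.card_pos.1
      rw [Finset.card_sdiff_of_subset (Finset.subset_univ _)]
      have hle : ({0, 1} : Finset F).card ≤ 2 := by
        apply le_trans (Finset.card_insert_le _ _); simp
      have : Finset.univ.card = Fintype.card F := Finset.card_univ
      omega
    obtain ⟨x, hx⟩ := hne
    rw [Finset.mem_sdiff, Finset.mem_insert, Finset.mem_singleton] at hx
    push_neg at hx
    obtain ⟨k, hk⟩ := hα x hx.2.1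
    cases k with
    | zero => exact hx.2.2 (by simpa using hk)
    | succ k' => exact hx.2.1 (by rw [hk, h0, zero_pow (Nat.succ_ne_zero k')])
  -- discrete logarithm
  have hpow_iff : ∀ a b : ℕ, α ^ a = α ^ b ↔ a ≡ b [MOD (r - 1) * (r + 1)] := by
    set u : Fˣ := Units.mk0 α hα0 with hu
    have hcoe : ∀ k : ℕ, ((u ^ k : Fˣ) : F) = α ^ k := fun k => by
      rw [Units.val_pow_eq_pow_val]; rfl
    have horder : orderOf u = (r - 1) * (r + 1) := by
      rw [← hQcard, ← Fintype.card_units, ← Nat.card_eq_fintype_card]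
      apply orderOf_eq_card_of_forall_mem_zpowers
      intro v
      obtain ⟨k, hk⟩ := hα (v : F) (Units.ne_zero v)
      exact ⟨(k : ℤ), Units.ext (by
        show ((u ^ (k : ℤ) : Fˣ) : F) = v
        rw [zpow_natCast, hcoe]; exact hk.symm)⟩
    intro a b
    rw [← hcoe a, ← hcoe b]
    rw [show (((u ^ a : Fˣ) : F) = ((u ^ b : Fˣ) : F)) ↔ u ^ a = u ^ b from
      ⟨fun h => Units.ext h, fun h => congrArg _ h⟩]
    rw [pow_eq_pow_iff_modEq, horder]
  have hpow_one : α ^ ((r - 1) * (r + 1)) = 1 := by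
    have := (hpow_iff ((r - 1) * (r + 1)) 0).2 (by
      simpa using (Nat.modEq_zero_iff_dvd).2 dvd_rfl)
    simpa using this
  have hcancel : ∀ a b : ℕ,
      (a * (r - 1) ≡ b * (r - 1) [MOD (r - 1) * (r + 1)]) ↔ (a ≡ b [MOD r + 1]) := by
    intro a b
    rw [show (r - 1) * (r + 1) = (r + 1) * (r - 1) from mul_comm _ _]
    exact Nat.ModEq.mul_right_cancel_iff' (by omega)
  -- -1 as a power of α
  have hneg1 : α ^ (t0 * (r - 1)) = -1 := by
    have hsq : α ^ (t0 * (r - 1)) * α ^ (t0 * (r - 1)) = 1 := by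
      rw [← pow_add]
      have e : t0 * (r - 1) + t0 * (r - 1) = (r - 1) * (r + 1) := by
        have e1 : t0 * (r - 1) + t0 * (r - 1) = (2 * t0) * (r - 1) := by ring
        rw [e1, h2t0]; ring
      rw [e, hpow_one]
    rcases mul_self_eq_one_iff.1 hsq with h | h
    · exfalso
      have h0 : α ^ (t0 * (r - 1)) = α ^ 0 := by simpa using h
      have hmod := (hpow_iff _ _).1 h0
      have hdvd : (r - 1) * (r + 1) ∣ t0 * (r - 1) := by
        simpa using (Nat.modEq_zero_iff_dvd).1 hmod
      have hlt : t0 * (r - 1) < (r - 1) * (r + 1) := by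
        calc t0 * (r - 1) < (r + 1) * (r - 1) :=
          (Nat.mul_lt_mul_right (by omega)).2 ht0lt
        _ = (r - 1) * (r + 1) := mul_comm _ _
      have hpos : 0 < t0 * (r - 1) := Nat.mul_pos ht0pos (by omega)
      exact absurd (Nat.le_of_dvd hpos hdvd) (by omega)
    · exact h
  -- the key equivalence for membership in the trace-zero coset
  have hcond : ∀ k : ℕ, ((α ^ k) ^ (r - 1) = -1 ↔ k ≡ t0 [MOD r + 1]) := by
    intro k
    rw [← pow_mul, ← hneg1, hpow_iff]
    exact hcancel k t0
  -- the subfield as a finset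
  haveI : ExpChar F p := ExpChar.prime Fact.out
  have hroddr : Odd r := ⟨ρ, by omega⟩
  set K : Finset F := Finset.univ.filter (fun y : F => y ^ r = y) with hK
  have hmemK : ∀ y : F, y ∈ K ↔ y ^ r = y := fun y => by simp [hK]
  have h0K : (0 : F) ∈ K := by
    rw [hmemK]; exact zero_pow (by omega : r ≠ 0)
  have hpow_id : ∀ e : ℕ, α ^ ((r - 1) * (r + 1) * e) = 1 := fun e => by
    rw [pow_mul, hpow_one, one_pow]
  have hsucc : r - 1 + 1 = r := by omega
  have hWimg : K.erase 0 = (Finset.range (r - 1)).image (fun b => α ^ ((r + 1) * b)) := by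
    ext y
    rw [Finset.mem_erase, hmemK, Finset.mem_image]
    constructor
    · rintro ⟨hy0, hyr⟩
      obtain ⟨k, rfl⟩ := hα y hy0
      have h1 : (α ^ k) ^ (r - 1) * α ^ k = 1 * α ^ k := by
        calc (α ^ k) ^ (r - 1) * α ^ k = (α ^ k) ^ (r - 1 + 1) := (pow_succ _ _).symm
        _ = (α ^ k) ^ r := by rw [hsucc]
        _ = α ^ k := hyr
        _ = 1 * α ^ k := (one_mul _).symm
      have h2 : α ^ (k * (r - 1)) = α ^ 0 := by
        rw [pow_mul, pow_zero]
        exact mul_right_cancel₀ (pow_ne_zero _ hα0) h1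
      have hmod := (hpow_iff _ _).1 h2
      have hdvd : (r - 1) * (r + 1) ∣ k * (r - 1) := by
        simpa using (Nat.modEq_zero_iff_dvd).1 hmod
      have hdvd2 : (r + 1) ∣ k := by
        have h3 : (r - 1) * (r + 1) ∣ (r - 1) * k := by rwa [mul_comm k (r - 1)] at hdvd
        exact (Nat.mul_dvd_mul_iff_left (show 0 < r - 1 by omega)).1 h3
      obtain ⟨e, he⟩ := hdvd2
      refine ⟨e % (r - 1), Finset.mem_range.2 (Nat.mod_lt _ (by omega)), ?_⟩
      have hde : (r - 1) * (e / (r - 1)) + e % (r - 1) = e := Nat.div_add_mod e (r - 1)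
      have hE : k = (r - 1) * (r + 1) * (e / (r - 1)) + (r + 1) * (e % (r - 1)) := by
        set qd := e / (r - 1) with hqd
        set wd := e % (r - 1) with hwd
        rw [he, ← hde]; ring
      rw [hE, pow_add, hpow_id, one_mul]
    · rintro ⟨b, hb, rfl⟩
      refine ⟨pow_ne_zero _ hα0, ?_⟩
      rw [← pow_mul]
      have hE : (r + 1) * b * r = (r - 1) * (r + 1) * b + (r + 1) * b := by
        calc (r + 1) * b * r = (r + 1) * b * (r - 1 + 1) := by rw [hsucc]
        _ = (r - 1) * (r + 1) * b + (r + 1) * b := by ring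
      rw [hE, pow_add, hpow_id, one_mul]
  have hWinj : ∀ a ∈ Finset.range (r - 1), ∀ b ∈ Finset.range (r - 1),
      α ^ ((r + 1) * a) = α ^ ((r + 1) * b) → a = b := by
    intro a ha b hb hab
    rw [Finset.mem_range] at ha hb
    have hmod := (hpow_iff _ _).1 hab
    rw [mul_comm (r - 1) (r + 1)] at hmod
    have h2 := Nat.ModEq.mul_left_cancel' (show r + 1 ≠ 0 by omega) hmod
    exact h2.eq_of_lt_of_lt ha hb
  have hKcard : K.card = r := by
    have h1 : (K.erase 0).card = r - 1 := by
      rw [hWimg, Finset.card_image_of_injOn (fun a ha b hb h => hWinj a ha b hb h),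
        Finset.card_range]
    have h2 : (K.erase 0).card = K.card - 1 := Finset.card_erase_of_mem h0K
    have h3 : 0 < K.card := Finset.card_pos.2 ⟨0, h0K⟩
    omega
  have hKadd : ∀ y ∈ K, ∀ z ∈ K, y + z ∈ K := by
    intro y hy z hz
    rw [hmemK] at hy hz ⊢
    show (y + z) ^ (p ^ s) = y + z
    rw [add_pow_char_pow]
    show y ^ r + z ^ r = y + z
    rw [hy, hz]
  have hKneg : ∀ y ∈ K, -y ∈ K := by
    intro y hy
    rw [hmemK] at hy ⊢
    rw [hroddr.neg_pow, hy]
  -- the inner character sum over the subfield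
  set T : F → ℂ := fun x => ∑ y ∈ K, canChar p F (x * y) with hT
  have hT1 : ∀ x : F, (∀ y ∈ K, canChar p F (x * y) = 1) → T x = r := by
    intro x hx
    have : T x = ∑ _y ∈ K, (1 : ℂ) := Finset.sum_congr rfl (fun y hy => hx y hy)
    rw [this, Finset.sum_const, hKcard, nsmul_eq_mul, mul_one]
  have hT0 : ∀ (x : F) (y0 : F), y0 ∈ K → canChar p F (x * y0) ≠ 1 → T x = 0 := by
    intro x y0 hy0 hne
    have htrans : T x = canChar p F (x * y0) * T x := by
      have h1 : ∑ y ∈ K, canChar p F (x * (y0 + y)) = ∑ y ∈ K, canChar p F (x * y) := by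
        refine Finset.sum_nbij' (fun y => y0 + y) (fun y => -y0 + y) ?_ ?_ ?_ ?_ ?_
        · exact fun a ha => hKadd y0 hy0 a ha
        · exact fun b hb => hKadd _ (hKneg y0 hy0) b hb
        · intro a _; ring
        · intro b _; ring
        · intro a _; rfl
      calc T x = ∑ y ∈ K, canChar p F (x * (y0 + y)) := h1.symm
      _ = ∑ y ∈ K, canChar p F (x * y0) * canChar p F (x * y) := by
          refine Finset.sum_congr rfl (fun y _ => ?_)
          rw [← canChar_add, mul_add]
      _ = canChar p F (x * y0) * T x := by rw [← Finset.mul_sum]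
    have h0 : (canChar p F (x * y0) - 1) * T x = 0 := by
      rw [sub_mul, one_mul, ← htrans, sub_self]
    rcases mul_eq_zero.1 h0 with h | h
    · exact absurd (by linear_combination h) hne
    · exact h
  have hTsum : ∑ x : F, T x = (r : ℂ) * r := by
    rw [show (∑ x : F, T x) = ∑ y ∈ K, ∑ x : F, canChar p F (x * y) from Finset.sum_comm]
    have h1 : ∀ y ∈ K, (∑ x : F, canChar p F (x * y))
        = if y = 0 then ((Fintype.card F : ℂ)) else 0 := by
      intro y _
      by_cases hy : y = 0
      · rw [if_pos hy, hy]
        have : ∀ x : F, canChar p F (x * 0) = 1 := fun x => by rw [mul_zero, canChar_zero]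
        rw [Finset.sum_congr rfl (fun x _ => this x), Finset.sum_const, Finset.card_univ,
          nsmul_eq_mul, mul_one]
      · rw [if_neg hy]
        have : ∀ x : F, canChar p F (x * y) = canChar p F (y * x) := fun x => by rw [mul_comm]
        rw [Finset.sum_congr rfl (fun x _ => this x)]
        exact sum_canChar_mul p F hy
    rw [Finset.sum_congr rfl h1, Finset.sum_ite_eq' K 0 (fun _ => ((Fintype.card F : ℂ))),
      if_pos h0K, hcard]
    push_cast
    ring
  -- the set where the inner sum is full
  set A : Finset F := Finset.univ.filter (fun x : F => ∀ y ∈ K, canChar p F (x * y) = 1)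
    with hA
  have hmemA : ∀ x : F, x ∈ A ↔ ∀ y ∈ K, canChar p F (x * y) = 1 := fun x => by simp [hA]
  have hTA : ∀ x ∈ A, T x = r := fun x hx => hT1 x ((hmemA x).1 hx)
  have hTA' : ∀ x : F, x ∉ A → T x = 0 := by
    intro x hx
    rw [hmemA] at hx
    push_neg at hx
    obtain ⟨y0, hy0, hne⟩ := hx
    exact hT0 x y0 hy0 hne
  have hAsum : ∑ x : F, T x = (A.card : ℂ) * r := by
    have hsplit := Finset.sum_filter_add_sum_filter_not (Finset.univ : Finset F)
      (fun x : F => ∀ y ∈ K, canChar p F (x * y) = 1) T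
    have h1 : ∑ x ∈ A, T x = (A.card : ℂ) * r := by
      rw [Finset.sum_congr rfl hTA, Finset.sum_const, nsmul_eq_mul]
    have h2 : ∑ x ∈ Finset.univ.filter
        (fun x : F => ¬ ∀ y ∈ K, canChar p F (x * y) = 1), T x = 0 := by
      refine Finset.sum_eq_zero (fun x hx => ?_)
      rw [Finset.mem_filter] at hx
      exact hTA' x (fun hmem => hx.2 ((hmemA x).1 hmem))
    rw [← hsplit]
    rw [show Finset.univ.filter (fun x : F => ∀ y ∈ K, canChar p F (x * y) = 1) = A from rfl]
    rw [h1, h2, add_zero]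
  have hAcard : A.card = r := by
    have hrc : ((r : ℂ)) ≠ 0 := Nat.cast_ne_zero.2 (by omega)
    have h1 : ((A.card : ℂ)) * r = (r : ℂ) * r := by rw [← hAsum, hTsum]
    have h2 : ((A.card : ℂ)) = (r : ℂ) := mul_right_cancel₀ hrc h1
    exact_mod_cast h2
  -- identify A with the trace-zero coset
  set B : Finset F := Finset.univ.filter (fun x : F => x ^ (r - 1) = -1) with hB
  have hmemB : ∀ x : F, x ∈ B ↔ x ^ (r - 1) = -1 := fun x => by simp [hB]
  have h0nB : (0 : F) ∉ B := by
    rw [hmemB, zero_pow (show r - 1 ≠ 0 by omega)]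
    intro h
    exact one_ne_zero (neg_eq_zero.1 h.symm)
  have hBimg : B = (Finset.range (r - 1)).image (fun a => α ^ (t0 + (r + 1) * a)) := by
    ext x
    rw [hmemB, Finset.mem_image]
    constructor
    · intro hx
      have hx0 : x ≠ 0 := by
        intro h0
        rw [h0, zero_pow (show r - 1 ≠ 0 by omega)] at hx
        exact one_ne_zero (neg_eq_zero.1 hx.symm)
      obtain ⟨k, rfl⟩ := hα x hx0
      have hmod : k ≡ t0 [MOD r + 1] := (hcond k).1 hx
      have hkmod : k % (r + 1) = t0 := by
        have h5 := hmod
        unfold Nat.ModEq at h5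
        rw [Nat.mod_eq_of_lt ht0lt] at h5
        exact h5
      have hke : (r + 1) * (k / (r + 1)) + t0 = k := by
        conv_rhs => rw [← Nat.div_add_mod k (r + 1)]
        rw [hkmod]
      set e := k / (r + 1) with he
      refine ⟨e % (r - 1), Finset.mem_range.2 (Nat.mod_lt _ (by omega)), ?_⟩
      have hde : (r - 1) * (e / (r - 1)) + e % (r - 1) = e := Nat.div_add_mod e (r - 1)
      have hE : k = (r - 1) * (r + 1) * (e / (r - 1)) + (t0 + (r + 1) * (e % (r - 1))) := by
        set qd := e / (r - 1) with hqd
        set wd := e % (r - 1) with hwd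
        rw [← hke, ← hde]; ring
      rw [hE]
      conv_rhs => rw [pow_add, hpow_id, one_mul]
    · rintro ⟨a, _, rfl⟩
      rw [hcond]
      show (t0 + (r + 1) * a) % (r + 1) = t0 % (r + 1)
      rw [Nat.add_mul_mod_self_left]
  have hBinj : ∀ a ∈ Finset.range (r - 1), ∀ b ∈ Finset.range (r - 1),
      α ^ (t0 + (r + 1) * a) = α ^ (t0 + (r + 1) * b) → a = b := by
    intro a ha b hb hab
    rw [Finset.mem_range] at ha hb
    have hmod := (hpow_iff _ _).1 hab
    have h2 := Nat.ModEq.add_left_cancel' t0 hmod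
    rw [mul_comm (r - 1) (r + 1)] at h2
    have h3 := Nat.ModEq.mul_left_cancel' (show r + 1 ≠ 0 by omega) h2
    exact h3.eq_of_lt_of_lt ha hb
  have hBcard : B.card = r - 1 := by
    rw [hBimg, Finset.card_image_of_injOn (fun a ha b hb h => hBinj a ha b hb h),
      Finset.card_range]
  have hB'A : insert (0 : F) B ⊆ A := by
    intro x hx
    rw [Finset.mem_insert] at hx
    rw [hmemA]
    intro y hy
    rcases hx with rfl | hx
    · rw [zero_mul]; exact canChar_zero p F
    · rw [hmemB] at hx
      have hyK := (hmemK y).1 hy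
      have hxr : x ^ r = -x := by
        calc x ^ r = x ^ (r - 1 + 1) := by rw [hsucc]
        _ = x ^ (r - 1) * x := pow_succ _ _
        _ = -1 * x := by rw [hx]
        _ = -x := by ring
      have hxyr : (x * y) ^ r = -(x * y) := by
        rw [mul_pow, hxr, hyK]; ring
      have htr := trace_pow_pow p F (x * y) s
      rw [← hr] at htr
      rw [hxyr, map_neg] at htr
      have h3 : (2 : ZMod p) * Algebra.trace (ZMod p) F (x * y) = 0 := by
        rw [two_mul]
        nth_rewrite 1 [← htr]
        ring
      have hp2 : (2 : ZMod p) ≠ 0 := by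
        haveI : NeZero p := ⟨(Fact.out : p.Prime).pos.ne'⟩
        intro h
        have h4 : ((2 : ℕ) : ZMod p) = 0 := by exact_mod_cast h
        rw [ZMod.natCast_eq_zero_iff] at h4
        have hp' : p = 2 := (Nat.prime_dvd_prime_iff_eq Fact.out Nat.prime_two).1 h4
        obtain ⟨c, hc⟩ := hps
        omega
      have h4 : Algebra.trace (ZMod p) F (x * y) = 0 := by
        rcases mul_eq_zero.1 h3 with h | h
        · exact absurd h hp2
        · exact h
      exact canChar_of_trace_eq_zero p F h4
  have hAeq : A = insert (0 : F) B := by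
    refine (Finset.eq_of_subset_of_card_le hB'A ?_).symm
    rw [hAcard, Finset.card_insert_of_notMem h0nB, hBcard]
    omega
  have hTval : ∀ x : F, x ≠ 0 → T x = (if x ^ (r - 1) = -1 then (r : ℂ) else 0) := by
    intro x hx
    by_cases hc : x ^ (r - 1) = -1
    · rw [if_pos hc]
      exact hT1 x ((hmemA x).1 (hB'A (Finset.mem_insert_of_mem ((hmemB x).2 hc))))
    · rw [if_neg hc]
      have hxA : x ∉ A := by
        rw [hAeq, Finset.mem_insert]
        push_neg
        exact ⟨hx, fun h => hc ((hmemB x).1 h)⟩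
      exact hTA' x hxA
  have hinner : ∀ x : F, x ≠ 0 →
      ∑ b ∈ Finset.range (r - 1), canChar p F (x * α ^ ((r + 1) * b))
        = (if x ^ (r - 1) = -1 then (r : ℂ) else 0) - 1 := by
    intro x hx
    have h1 : ∑ b ∈ Finset.range (r - 1), canChar p F (x * α ^ ((r + 1) * b))
        = ∑ y ∈ K.erase 0, canChar p F (x * y) := by
      rw [hWimg, Finset.sum_image (fun a ha b hb h => hWinj a ha b hb h)]
    rw [h1, Finset.sum_erase_eq_sub h0K, mul_zero, canChar_zero,
      show (∑ y ∈ K, canChar p F (x * y)) = T x from rfl, hTval x hx]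
  -- assembling the Gaussian period
  have hpowNk : ∀ k : ℕ, α ^ i * (α ^ N) ^ k = α ^ (i + N * k) := fun k => by
    rw [← pow_mul, ← pow_add]
  have hNL : N * (M * (r - 1)) = (r - 1) * (r + 1) := by
    rw [← mul_assoc, hNM]; ring
  have hL0 : 0 < M * (r - 1) := Nat.mul_pos hM0 (by omega)
  have hLinj : ∀ a ∈ Finset.range (M * (r - 1)), ∀ b ∈ Finset.range (M * (r - 1)),
      α ^ (i + N * a) = α ^ (i + N * b) → a = b := by
    intro a ha b hb hab
    rw [Finset.mem_range] at ha hb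
    have hmod := (hpow_iff _ _).1 hab
    rw [← hNL] at hmod
    have h2 := Nat.ModEq.add_left_cancel' i hmod
    have h3 := Nat.ModEq.mul_left_cancel' (show N ≠ 0 by omega) h2
    exact h3.eq_of_lt_of_lt ha hb
  have hset : Finset.univ.filter (fun x : F => ∃ k : ℕ, x = α ^ i * (α ^ N) ^ k)
      = (Finset.range (M * (r - 1))).image (fun k => α ^ (i + N * k)) := by
    ext x
    rw [Finset.mem_filter, Finset.mem_image]
    simp only [Finset.mem_univ, true_and, Finset.mem_range]
    constructor
    · rintro ⟨k, rfl⟩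
      refine ⟨k % (M * (r - 1)), Nat.mod_lt _ hL0, ?_⟩
      rw [hpowNk]
      apply (hpow_iff _ _).2
      have h1 := ((Nat.mod_modEq k (M * (r - 1))).mul_left' (c := N)).add_left i
      rwa [hNL] at h1
    · rintro ⟨k, _, rfl⟩
      exact ⟨k, (hpowNk k).symm⟩
  have hstep1 : gaussPeriod p F α N i
      = ∑ k ∈ Finset.range (M * (r - 1)), canChar p F (α ^ (i + N * k)) := by
    rw [gaussPeriod, ← Finset.sum_filter, hset,
      Finset.sum_image (fun a ha b hb h => hLinj a ha b hb h)]
  have hstep2 : ∑ k ∈ Finset.range (M * (r - 1)), canChar p F (α ^ (i + N * k))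
      = ∑ a ∈ Finset.range M, ∑ b ∈ Finset.range (r - 1),
          canChar p F (α ^ (i + N * a) * α ^ ((r + 1) * b)) := by
    rw [← Finset.sum_product']
    refine Finset.sum_nbij' (fun k => (k % M, k / M)) (fun ab => ab.1 + M * ab.2)
      ?_ ?_ ?_ ?_ ?_
    · intro k hk
      rw [Finset.mem_range] at hk
      rw [Finset.mem_product, Finset.mem_range, Finset.mem_range]
      refine ⟨Nat.mod_lt _ hM0, ?_⟩
      rw [Nat.div_lt_iff_lt_mul hM0]
      rwa [mul_comm (r - 1) M]
    · intro ab hab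
      rw [Finset.mem_product, Finset.mem_range, Finset.mem_range] at hab
      rw [Finset.mem_range]
      calc ab.1 + M * ab.2 < M + M * ab.2 := Nat.add_lt_add_right hab.1 _
      _ = M * (ab.2 + 1) := by ring
      _ ≤ M * (r - 1) := Nat.mul_le_mul_left M (by omega)
    · intro k _
      exact Nat.mod_add_div k M
    · intro ab hab
      rw [Finset.mem_product, Finset.mem_range, Finset.mem_range] at hab
      have h1 : (ab.1 + M * ab.2) % M = ab.1 := by
        rw [Nat.add_mul_mod_self_left, Nat.mod_eq_of_lt hab.1]
      have h2 : (ab.1 + M * ab.2) / M = ab.2 := by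
        rw [Nat.add_mul_div_left _ _ hM0, Nat.div_eq_of_lt hab.1, zero_add]
      rw [h1, h2]
    · intro k _
      dsimp only
      set a := k % M with ha
      set b := k / M with hb2
      have hk : k = a + M * b := (Nat.mod_add_div k M).symm
      have e : N * (a + M * b) = N * a + N * M * b := by ring
      rw [hNM] at e
      rw [hk, ← pow_add]
      congr 2
      calc i + N * (a + M * b) = i + (N * a + (r + 1) * b) := by rw [e]
      _ = i + N * a + (r + 1) * b := by ring
  have hiff : ∀ a : ℕ, a < M → (((α ^ (i + N * a)) ^ (r - 1) = -1) ↔ (i = n ∧ a = m)) := by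
    intro a ha
    rw [hcond]
    constructor
    · intro h
      have hlt : i + N * a < r + 1 := by
        have h1 : a ≤ M - 1 := by omega
        have h2 : N * a ≤ N * (M - 1) := Nat.mul_le_mul_left N h1
        have h3 : N * (M - 1) + N = N * M := by
          rw [← Nat.mul_succ]; congr 1; omega
        omega
      have heq : i + N * a = t0 := h.eq_of_lt_of_lt hlt ht0lt
      have hieq : i = n := by
        have e1 : (i + N * a) % N = i % N := Nat.add_mul_mod_self_left i N a
        have e2 : (n + N * m) % N = n % N := Nat.add_mul_mod_self_left n N m
        have e3 : i + N * a = n + N * m := by omega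
        have h1 : i % N = n % N := by rw [← e1, e3, e2]
        rwa [Nat.mod_eq_of_lt hi, Nat.mod_eq_of_lt hnN] at h1
      refine ⟨hieq, ?_⟩
      have h4 : N * a = N * m := by omega
      exact Nat.eq_of_mul_eq_mul_left hN0 h4
    · rintro ⟨h1, h2⟩
      rw [h1, h2]
      have h5 : n + N * m = t0 := by omega
      rw [h5]
  have hfinal : gaussPeriod p F α N i
      = ∑ a ∈ Finset.range M, ((if i = n ∧ a = m then (r : ℂ) else 0) - 1) := by
    rw [hstep1, hstep2]
    refine Finset.sum_congr rfl (fun a ha => ?_)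
    rw [Finset.mem_range] at ha
    have hx0 : α ^ (i + N * a) ≠ 0 := pow_ne_zero _ hα0
    rw [hinner (α ^ (i + N * a)) hx0]
    congr 1
    by_cases hc : i = n ∧ a = m
    · rw [if_pos ((hiff a ha).2 hc), if_pos hc]
    · rw [if_neg (fun h => hc ((hiff a ha).1 h)), if_neg hc]
  rw [hfinal, Finset.sum_sub_distrib, Finset.sum_const, Finset.card_range, nsmul_eq_mul,
    mul_one]
  congr 1
  by_cases hc : i = n
  · rw [if_pos hc]
    have h1 : ∀ a ∈ Finset.range M,
        (if i = n ∧ a = m then (r : ℂ) else 0) = (if a = m then (r : ℂ) else 0) := by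
      intro a _
      by_cases h : a = m
      · rw [if_pos ⟨hc, h⟩, if_pos h]
      · rw [if_neg (fun hh => h hh.2), if_neg h]
    rw [Finset.sum_congr rfl h1, Finset.sum_ite_eq' (Finset.range M) m (fun _ => (r : ℂ)),
      if_pos (Finset.mem_range.2 (by omega))]
  · have h1 : ∀ a ∈ Finset.range M, (if i = n ∧ a = m then (r : ℂ) else 0) = 0 := by
      intro a _
      rw [if_neg (fun h => hc h.1)]
    rw [Finset.sum_congr rfl h1, Finset.sum_const_zero, if_neg hc]

end Key

/-- The semiprimitive case, part (a): if `γ, p, (p^j+1)/N` are all odd, then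
`η_{N/2}^{(N,q)} = √q − (√q+1)/N` and `η_i^{(N,q)} = −(√q+1)/N` for `i ≠ N/2`. -/
theorem stmt3 (p j γ N q : ℕ) (hp : p.Prime) (hN : 2 ≤ N)
    (hj : 0 < j) (hγ : 0 < γ)
    (F : Type*) [Field F] [Fintype F] [Algebra (ZMod p) F]
    (hq : q = Fintype.card F) (hqs : q = p ^ (2 * j * γ))
    (hNdvd : N ∣ p ^ j + 1)
    (hjmin : ∀ j' : ℕ, 0 < j' → N ∣ p ^ j' + 1 → j ≤ j')
    (α : F) (hα : ∀ x : F, x ≠ 0 → ∃ k : ℕ, x = α ^ k)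
    (hoddγ : Odd γ) (hoddp : Odd p) (hoddq : Odd ((p ^ j + 1) / N)) :
    gaussPeriod p F α N (N / 2) =
      (Real.sqrt q : ℂ) - ((Real.sqrt q : ℂ) + 1) / N ∧
    ∀ i : ℕ, i < N → i ≠ N / 2 →
      gaussPeriod p F α N i = -(((Real.sqrt q : ℂ) + 1) / N) := by
  haveI := Fact.mk hp
  -- the odd cofactor
  obtain ⟨T, hToddT, hTeq⟩ :
      ∃ T : ℤ, Odd T ∧ ((p : ℤ) ^ j + 1) * T = (p : ℤ) ^ (j * γ) + 1 := by
    refine ⟨∑ k ∈ Finset.range γ, (-(p : ℤ) ^ j) ^ k, ?_, ?_⟩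
    · have hterm : ∀ k : ℕ, (-(p : ℤ) ^ j) ^ k % 2 = 1 := by
        intro k
        have ho : Odd ((-(p : ℤ) ^ j) ^ k) := by
          refine Odd.pow ?_
          rw [odd_neg]
          exact Odd.pow (by exact_mod_cast hoddp)
        exact Int.odd_iff.1 ho
      have hsum : ∀ l : ℕ, (∑ k ∈ Finset.range l, (-(p : ℤ) ^ j) ^ k) % 2 = (l : ℤ) % 2 := by
        intro l
        induction l with
        | zero => simp
        | succ l ih =>
            rw [Finset.sum_range_succ]
            have := hterm l
            push_cast
            omega
      rw [Int.odd_iff, hsum γ]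
      have : Odd (γ : ℤ) := by exact_mod_cast hoddγ
      exact Int.odd_iff.1 this
    · have hg := geom_sum_mul (-(p : ℤ) ^ j) γ
      have hx : (-(p : ℤ) ^ j) ^ γ = -((p : ℤ) ^ j) ^ γ := hoddγ.neg_pow _
      rw [hx] at hg
      have : ((p : ℤ) ^ j + 1) * (∑ k ∈ Finset.range γ, (-(p : ℤ) ^ j) ^ k)
          = -((∑ k ∈ Finset.range γ, (-(p : ℤ) ^ j) ^ k) * (-(p : ℤ) ^ j - 1)) := by ring
      rw [this, hg, ← pow_mul]
      ring
  have hdvdN : N ∣ p ^ (j * γ) + 1 := by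
    have h1 : ((N : ℤ)) ∣ ((p : ℤ) ^ j + 1) := by exact_mod_cast hNdvd
    have h2 : ((N : ℤ)) ∣ ((p : ℤ) ^ (j * γ) + 1) := by
      rw [← hTeq]; exact Dvd.dvd.mul_right h1 T
    have h3 : ((N : ℤ)) ∣ ((p ^ (j * γ) + 1 : ℕ) : ℤ) := by push_cast; exact h2
    exact_mod_cast h3
  set M : ℕ := (p ^ (j * γ) + 1) / N with hM
  have hNM : N * M = p ^ (j * γ) + 1 := Nat.mul_div_cancel' hdvdN
  set M0 : ℕ := (p ^ j + 1) / N with hM0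
  have hNM0 : N * M0 = p ^ j + 1 := Nat.mul_div_cancel' hNdvd
  have hModd : Odd M := by
    have h1 : ((N : ℤ)) * M = ((N : ℤ)) * (M0 * T) := by
      have e1 : ((N : ℤ)) * M = ((p : ℤ) ^ (j * γ) + 1) := by
        rw [show ((N : ℤ)) * M = ((N * M : ℕ) : ℤ) by push_cast; ring, hNM]; push_cast; ring
      have e2 : ((N : ℤ)) * (M0 * T) = ((p : ℤ) ^ (j * γ) + 1) := by
        rw [← hTeq, ← mul_assoc,
          show ((N : ℤ)) * M0 = ((N * M0 : ℕ) : ℤ) by push_cast; ring, hNM0]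
        push_cast; ring
      rw [e1, e2]
    have h2 : (M : ℤ) = M0 * T :=
      mul_left_cancel₀ (show ((N : ℤ)) ≠ 0 by exact_mod_cast (by omega : N ≠ 0)) h1
    have h3 : Odd ((M : ℤ)) := by
      rw [h2]
      exact Odd.mul (by exact_mod_cast hoddq) hToddT
    exact_mod_cast h3
  have hcard : Fintype.card F = p ^ (j * γ) * p ^ (j * γ) := by
    rw [← hq, hqs, ← pow_add]
    congr 1
    ring
  -- computing √q
  have hsq : (Real.sqrt q : ℂ) = ((p ^ (j * γ) : ℕ) : ℂ) := by
    have h1 : (q : ℝ) = ((p ^ (j * γ) : ℕ) : ℝ) ^ 2 := by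
      rw [hqs]; push_cast; rw [← pow_mul]; congr 1; ring
    rw [h1, Real.sqrt_sq (by positivity)]
    norm_cast
  have hNne : ((N : ℂ)) ≠ 0 := Nat.cast_ne_zero.2 (by omega)
  have hMc : (((Real.sqrt q : ℝ) : ℂ) + 1) / N = (M : ℂ) := by
    rw [hsq]
    have h1 : ((p ^ (j * γ) : ℕ) : ℂ) + 1 = (N : ℂ) * M := by
      rw [show ((N : ℂ)) * M = ((N * M : ℕ) : ℂ) by push_cast; ring, hNM]
      push_cast; ring
    rw [h1, mul_comm, mul_div_assoc, div_self hNne, mul_one]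
  constructor
  · have hkey := key_period p (j * γ) N M F hoddp hcard hNM hModd hN α hα (N / 2)
      (Nat.div_lt_self (by omega) one_lt_two)
    rw [if_pos rfl] at hkey
    rw [hkey, hMc, hsq]
  · intro i hi hne
    have hkey := key_period p (j * γ) N M F hoddp hcard hNM hModd hN α hα i hi
    rw [if_neg hne] at hkey
    rw [hkey, hMc]
    ring
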